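/- Let v > 4 and let l ∈ Z_v* have multiplicative order exactly 2. If l + 1 ≡ 0 (mod v), or if v ≡ 0 (mod 4) and l ≡ 1 (mod v/2), then N(v,3,l) = 0; otherwise N(v,3,l) = 3φ(v)/2, where φ is Euler's totient function. -/

import Mathlib

open scoped Pointwise

/-- `B_con(v,3)`: base lines of connected cyclic configurations of type (v₃). -/
def Bcon3 (v : ℕ) : Set (Finset (ZMod v)) :=
  {X | X.card = 3 ∧ (X - X).card = 7 ∧
    AddSubgroup.closure ((X - X : Finset (ZMod v)) : Set (ZMod v)) = ⊤}

/-- `N(v,3,l)`: the number of `X ∈ B_con(v,3)` with `0 ∈ X` such that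
`lX = X - x` for some `x ∈ X`. -/
noncomputable def Nparam3 (v : ℕ) (l : (ZMod v)ˣ) : ℕ :=
  Nat.card {X : Finset (ZMod v) // X ∈ Bcon3 v ∧ (0 : ZMod v) ∈ X ∧
    ∃ x ∈ X, X.image (fun y => (l : ZMod v) * y) = X.image (fun y => y - x)}

section Aux

variable {v : ℕ}

/-- The nine distinctness conditions making `{0,a,b}` have a difference set of size 7. -/
def Conds9 {v : ℕ} (a b : ZMod v) : Prop :=
  a ≠ 0 ∧ b ≠ 0 ∧ a ≠ b ∧ a + b ≠ 0 ∧ a ≠ 2*b ∧ b ≠ 2*a ∧ 2*a ≠ 0 ∧ 2*b ≠ 0 ∧ 2*(a-b) ≠ 0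

lemma conds9_swap {a b : ZMod v} (h : Conds9 a b) : Conds9 b a := by
  obtain ⟨h1,h2,h3,h4,h5,h6,h7,h8,h9⟩ := h
  exact ⟨h2, h1, fun h => h3 h.symm, fun h => h4 (by linear_combination h),
    fun h => h6 h, fun h => h5 h, h8, h7, fun h => h9 (by linear_combination -h)⟩

lemma sub_lit (a b : ZMod v) :
    ({0,a,b} : Finset (ZMod v)) - {0,a,b} = {0,a,b,-a,-b,a-b,b-a} := by
  ext z
  simp only [Finset.mem_sub, Finset.mem_insert, Finset.mem_singleton]
  constructor
  · rintro ⟨c, (rfl|rfl|rfl), d, (rfl|rfl|rfl), rfl⟩ <;> simp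
  · rintro (h|h|h|h|h|h|h)
    · exact ⟨0, Or.inl rfl, 0, Or.inl rfl, by rw [h]; ring⟩
    · exact ⟨a, Or.inr (Or.inl rfl), 0, Or.inl rfl, by rw [h]; ring⟩
    · exact ⟨b, Or.inr (Or.inr rfl), 0, Or.inl rfl, by rw [h]; ring⟩
    · exact ⟨0, Or.inl rfl, a, Or.inr (Or.inl rfl), by rw [h]; ring⟩
    · exact ⟨0, Or.inl rfl, b, Or.inr (Or.inr rfl), by rw [h]; ring⟩
    · exact ⟨a, Or.inr (Or.inl rfl), b, Or.inr (Or.inr rfl), by rw [h]⟩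
    · exact ⟨b, Or.inr (Or.inr rfl), a, Or.inr (Or.inl rfl), by rw [h]⟩

lemma card7_iff (a b : ZMod v) :
    ({0,a,b,-a,-b,a-b,b-a} : Finset (ZMod v)).card = 7 ↔ Conds9 a b := by
  have h : ({0,a,b,-a,-b,a-b,b-a} : Finset (ZMod v)) = [0,a,b,-a,-b,a-b,b-a].toFinset := by simp
  have hlen : ([0,a,b,-a,-b,a-b,b-a] : List (ZMod v)).length = 7 := rfl
  have key : ({0,a,b,-a,-b,a-b,b-a} : Finset (ZMod v)).card = 7 ↔
      ([0,a,b,-a,-b,a-b,b-a] : List (ZMod v)).Nodup := by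
    rw [h]
    constructor
    · intro hc
      have := Multiset.toFinset_card_eq_card_iff_nodup
        (m := (([0,a,b,-a,-b,a-b,b-a] : List (ZMod v)) : Multiset (ZMod v))) |>.1
        (by simpa using hc)
      simpa using this
    · intro hn
      rw [List.toFinset_card_of_nodup hn]; exact hlen
  rw [key]
  simp only [List.nodup_cons, List.mem_cons, List.not_mem_nil, or_false, not_or,
    List.mem_singleton, List.nodup_nil, and_true]
  constructor
  · rintro ⟨⟨g01,g02,g03,g04,g05,g06⟩,⟨g12,g13,g14,g15,g16⟩,⟨g23,g24,g25,g26⟩,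
      ⟨g34,g35,g36⟩,⟨g45,g46⟩,g56,-⟩
    exact ⟨fun h => g01 (by linear_combination -h), fun h => g02 (by linear_combination -h),
      g12, fun h => g14 (by linear_combination h), fun h => g25 (by linear_combination -h),
      fun h => g16 (by linear_combination -h), fun h => g13 (by linear_combination h),
      fun h => g24 (by linear_combination h), fun h => g56 (by linear_combination h)⟩
  · rintro ⟨h1,h2,h3,h4,h5,h6,h7,h8,h9⟩
    refine ⟨⟨fun h => h1 (by linear_combination -h), fun h => h2 (by linear_combination -h),
        fun h => h1 (by linear_combination h), fun h => h2 (by linear_combination h),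
        fun h => h3 (by linear_combination -h), fun h => h3 (by linear_combination h)⟩,
      ⟨h3, fun h => h7 (by linear_combination h), fun h => h4 (by linear_combination h),
        fun h => h2 (by linear_combination h), fun h => h6 (by linear_combination -h)⟩,
      ⟨fun h => h4 (by linear_combination h), fun h => h8 (by linear_combination h),
        fun h => h5 (by linear_combination -h), fun h => h1 (by linear_combination h)⟩,
      ⟨fun h => h3 (by linear_combination -h), fun h => h6 (by linear_combination h),
        fun h => h2 (by linear_combination -h)⟩,
      ⟨fun h => h1 (by linear_combination -h), fun h => h5 (by linear_combination h)⟩,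
      fun h => h9 (by linear_combination h), fun h => h⟩

lemma card3_of (a b : ZMod v) (h1 : a ≠ 0) (h2 : b ≠ 0) (h3 : a ≠ b) :
    ({0,a,b} : Finset (ZMod v)).card = 3 := by
  have m1 : (0 : ZMod v) ∉ ({a, b} : Finset (ZMod v)) := by
    simp only [Finset.mem_insert, Finset.mem_singleton]
    push_neg
    exact ⟨Ne.symm h1, Ne.symm h2⟩
  have m2 : a ∉ ({b} : Finset (ZMod v)) := by simpa using h3
  rw [Finset.card_insert_of_notMem m1, Finset.card_insert_of_notMem m2,
    Finset.card_singleton]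

lemma mul_mem_closure [NeZero v] (a c : ZMod v) :
    c * a ∈ AddSubgroup.closure ({a} : Set (ZMod v)) := by
  rw [AddSubgroup.mem_closure_singleton]
  refine ⟨(c.val : ℤ), ?_⟩
  rw [zsmul_eq_mul]
  norm_cast
  rw [ZMod.natCast_rightInverse c]

lemma closure_eq_top_of_isUnit [NeZero v] {a : ZMod v} (hu : IsUnit a) :
    AddSubgroup.closure ({a} : Set (ZMod v)) = ⊤ := by
  rw [eq_top_iff]
  intro x _
  obtain ⟨b, hb⟩ := hu.exists_left_inv
  have h : (x * b) * a = x := by rw [mul_assoc, hb, mul_one]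
  rw [← h]
  exact mul_mem_closure a (x * b)

lemma isUnit_of_closure {a : ZMod v}
    (h : (1 : ZMod v) ∈ AddSubgroup.closure ({a} : Set (ZMod v))) : IsUnit a := by
  rw [AddSubgroup.mem_closure_singleton] at h
  obtain ⟨n, hn⟩ := h
  rw [zsmul_eq_mul] at hn
  exact IsUnit.of_mul_eq_one (a := a) n (by rw [mul_comm]; exact hn)

lemma eq_of_mul_unit_eq {c d : ZMod v} (u : (ZMod v)ˣ) (h : c * u = d * u) : c = d := by
  have h2 := congrArg (fun t => t * ((u⁻¹ : (ZMod v)ˣ) : ZMod v)) h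
  simpa [mul_assoc, Units.mul_inv, mul_one] using h2

lemma unit_factor_zero {c : ZMod v} (u : (ZMod v)ˣ) (h : c * u = 0) : c = 0 :=
  eq_of_mul_unit_eq u (by rw [h, zero_mul])

end Aux

section Forward

variable {v : ℕ}

lemma forward (hv : 4 < v) (l : (ZMod v)ˣ)
    (hl2 : (l : ZMod v) * l = 1) (hl1 : (l : ZMod v) ≠ 1)
    {X : Finset (ZMod v)}
    (hX : X ∈ Bcon3 v ∧ (0 : ZMod v) ∈ X ∧
      ∃ x ∈ X, X.image (fun y => (l : ZMod v) * y) = X.image (fun y => y - x)) :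
    (∃ u : (ZMod v)ˣ, X = {0, (u : ZMod v), (l : ZMod v) * (u : ZMod v)} ∧
        Conds9 (u : ZMod v) ((l : ZMod v) * (u : ZMod v))) ∨
    (∃ u : (ZMod v)ˣ, X = {0, (1 - (l : ZMod v)) * (u : ZMod v), (u : ZMod v)} ∧
        Conds9 ((1 - (l : ZMod v)) * (u : ZMod v)) (u : ZMod v)) := by
  haveI : NeZero v := ⟨by omega⟩
  obtain ⟨⟨hc3, hc7, hclos⟩, h0, x, hxX, himg⟩ := hX
  obtain ⟨p, q, r, hpq, hpr, hqr, hXeq⟩ := Finset.card_eq_three.mp hc3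
  have h0' : (0 : ZMod v) = p ∨ (0 : ZMod v) = q ∨ (0 : ZMod v) = r := by
    have := h0; rw [hXeq] at this; simpa using this
  obtain ⟨a, b, hab, ha, hb, hXab⟩ :
      ∃ a b : ZMod v, a ≠ b ∧ a ≠ 0 ∧ b ≠ 0 ∧ X = {0, a, b} := by
    rcases h0' with h|h|h
    · subst h; exact ⟨q, r, hqr, Ne.symm hpq, Ne.symm hpr, hXeq⟩
    · subst h; exact ⟨p, r, hpr, hpq, Ne.symm hqr, by rw [hXeq, Finset.insert_comm]⟩
    · subst h
      refine ⟨p, q, hpq, hpr, hqr, ?_⟩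
      rw [hXeq]; ext z; simp; tauto
  clear hXeq hpq hpr hqr h0'
  have hconds : Conds9 a b := by
    rw [hXab, sub_lit] at hc7
    exact (card7_iff a b).mp hc7
  obtain ⟨h1, h2, h3, h4, h5, h6, h7, h8, h9⟩ := hconds
  have unit_of_multiples : ∀ g c0 c1 : ZMod v, a = c0 * g → b = c1 * g → IsUnit g := by
    intro g c0 c1 ha' hb'
    have hsubset : ((X - X : Finset (ZMod v)) : Set (ZMod v)) ⊆
        ↑(AddSubgroup.closure ({g} : Set (ZMod v))) := by
      rw [hXab, sub_lit]
      intro z hz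
      simp only [Finset.coe_insert, Set.mem_insert_iff, Finset.coe_singleton,
        Set.mem_singleton_iff] at hz
      rcases hz with h|h|h|h|h|h|h
      · rw [h]; exact zero_mem _
      · rw [h, ha']; exact mul_mem_closure g c0
      · rw [h, hb']; exact mul_mem_closure g c1
      · rw [h, ha', show -(c0 * g) = (-c0) * g by ring]; exact mul_mem_closure g (-c0)
      · rw [h, hb', show -(c1 * g) = (-c1) * g by ring]; exact mul_mem_closure g (-c1)
      · rw [h, ha', hb', show c0 * g - c1 * g = (c0 - c1) * g by ring]
        exact mul_mem_closure g (c0 - c1)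
      · rw [h, ha', hb', show c1 * g - c0 * g = (c1 - c0) * g by ring]
        exact mul_mem_closure g (c1 - c0)
    have hle := (AddSubgroup.closure_le (AddSubgroup.closure ({g} : Set (ZMod v)))).2 hsubset
    rw [hclos] at hle
    exact isUnit_of_closure (hle (AddSubgroup.mem_top 1))
  have not_fixed : ¬ ((l : ZMod v) * a = a ∧ (l : ZMod v) * b = b) := by
    rintro ⟨ea, eb⟩
    have heq : Set.EqOn (AddMonoidHom.mulLeft (l : ZMod v)) (AddMonoidHom.id (ZMod v))
        ((X - X : Finset (ZMod v)) : Set (ZMod v)) := by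
      rw [hXab, sub_lit]
      intro z hz
      simp only [Finset.coe_insert, Set.mem_insert_iff, Finset.coe_singleton,
        Set.mem_singleton_iff] at hz
      simp only [AddMonoidHom.coe_mulLeft, AddMonoidHom.id_apply]
      rcases hz with h|h|h|h|h|h|h <;> rw [h]
      · simp
      · exact ea
      · exact eb
      · linear_combination -ea
      · linear_combination -eb
      · linear_combination ea - eb
      · linear_combination eb - ea
    have hEq := AddMonoidHom.eqOn_closure heq
    rw [hclos] at hEq
    have h1l : (l : ZMod v) * 1 = 1 := hEq (AddSubgroup.mem_top 1)
    exact hl1 (by linear_combination h1l)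
  -- cancellation by l
  have hcancel : ∀ y z : ZMod v, (l : ZMod v) * y = (l : ZMod v) * z → y = z := by
    intro y z h
    linear_combination (l : ZMod v) * h - (y - z) * hl2
  have hla0 : (l : ZMod v) * a ≠ 0 := fun h => ha ((Units.mul_right_eq_zero l).mp h)
  have hlb0 : (l : ZMod v) * b ≠ 0 := fun h => hb ((Units.mul_right_eq_zero l).mp h)
  -- membership facts
  have hmem : ∀ y : ZMod v, y ∈ X → (l : ZMod v) * y ∈ X.image (fun y => y - x) := by
    intro y hy
    rw [← himg]
    exact Finset.mem_image_of_mem _ hy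
  have mla := hmem a (by rw [hXab]; simp)
  have mlb := hmem b (by rw [hXab]; simp)
  rw [hXab] at mla mlb hxX
  simp only [Finset.mem_image, Finset.mem_insert, Finset.mem_singleton] at mla mlb hxX
  obtain ⟨y, hy, hyA⟩ := mla
  obtain ⟨z, hz, hzB⟩ := mlb
  rcases hxX with hx|hx|hx <;> rw [hx] at hyA hzB
  · -- x = 0
    rcases hy with h|h|h <;> rw [h] at hyA <;> rcases hz with h'|h'|h' <;> rw [h'] at hzB
    · exact absurd (by linear_combination -hyA) hla0
    · exact absurd (by linear_combination -hyA) hla0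
    · exact absurd (by linear_combination -hyA) hla0
    · exact absurd (by linear_combination -hzB) hlb0
    · -- l*a = a, l*b = a
      exact absurd (hcancel a b (by linear_combination hzB - hyA)) h3
    · -- l*a = a, l*b = b : fixed
      exact absurd ⟨by linear_combination -hyA, by linear_combination -hzB⟩ not_fixed
    · exact absurd (by linear_combination -hzB) hlb0
    · -- l*a = b, l*b = a : branch 1
      have e : b = (l : ZMod v) * a := by linear_combination hyA
      have hu : IsUnit a := unit_of_multiples a 1 (l : ZMod v) (by ring) e
      refine Or.inl ⟨hu.unit, ?_, ?_⟩
      · rw [hXab, hu.unit_spec, ← e]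
      · rw [hu.unit_spec, ← e]; exact ⟨h1,h2,h3,h4,h5,h6,h7,h8,h9⟩
    · -- l*a = b, l*b = b
      exact absurd (hcancel a b (by linear_combination hzB - hyA)) h3
  · -- x = a
    rcases hy with h|h|h <;> rw [h] at hyA <;> rcases hz with h'|h'|h' <;> rw [h'] at hzB
    · -- l*a = -a, l*b = -a
      exact absurd (hcancel a b (by linear_combination hzB - hyA)) h3
    · exact absurd (by linear_combination -hzB) hlb0
    · -- l*a = -a, l*b = b - a : branch 2
      have e : a = (1 - (l : ZMod v)) * b := by linear_combination -hzB
      have hu : IsUnit b := unit_of_multiples b (1 - (l : ZMod v)) 1 e (by ring)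
      refine Or.inr ⟨hu.unit, ?_, ?_⟩
      · rw [hXab, hu.unit_spec, ← e]
      · rw [hu.unit_spec, ← e]; exact ⟨h1,h2,h3,h4,h5,h6,h7,h8,h9⟩
    · exact absurd (by linear_combination -hyA) hla0
    · exact absurd (by linear_combination -hyA) hla0
    · exact absurd (by linear_combination -hyA) hla0
    · -- l*a = b - a, l*b = -a : contradiction a + b = 0
      have e1 : (l : ZMod v) * a = b - a := by linear_combination -hyA
      have e2 : (l : ZMod v) * b = -a := by linear_combination -hzB
      exact absurd (by linear_combination (l : ZMod v) * e1 + e2 - e1 - a * hl2) h4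
    · exact absurd (by linear_combination -hzB) hlb0
    · -- l*a = b - a, l*b = b - a
      exact absurd (hcancel a b (by linear_combination hzB - hyA)) h3
  · -- x = b
    rcases hy with h|h|h <;> rw [h] at hyA <;> rcases hz with h'|h'|h' <;> rw [h'] at hzB
    · -- l*a = -b, l*b = -b
      exact absurd (hcancel a b (by linear_combination hzB - hyA)) h3
    · -- l*a = -b, l*b = a - b : contradiction b = 2a
      have e1 : (l : ZMod v) * a = -b := by linear_combination -hyA
      have e2 : (l : ZMod v) * b = a - b := by linear_combination -hzB
      exact absurd (by linear_combination e2 - (l : ZMod v) * e1 + a * hl2) h6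
    · exact absurd (by linear_combination -hzB) hlb0
    · -- l*a = a - b, l*b = -b : branch 3
      have e : b = (1 - (l : ZMod v)) * a := by linear_combination -hyA
      have hu : IsUnit a := unit_of_multiples a 1 (1 - (l : ZMod v)) (by ring) e
      refine Or.inr ⟨hu.unit, ?_, ?_⟩
      · rw [hXab, hu.unit_spec, ← e, Finset.pair_comm a b]
      · rw [hu.unit_spec, ← e]; exact conds9_swap ⟨h1,h2,h3,h4,h5,h6,h7,h8,h9⟩
    · -- l*a = a - b, l*b = a - b
      exact absurd (hcancel a b (by linear_combination hzB - hyA)) h3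
    · exact absurd (by linear_combination -hzB) hlb0
    · exact absurd (by linear_combination -hyA) hla0
    · exact absurd (by linear_combination -hyA) hla0
    · exact absurd (by linear_combination -hyA) hla0

end Forward

section Backward
variable {v : ℕ}

-- facts from v > 4 and l^2 = 1
lemma two_ne (hv : 4 < v) : (2 : ZMod v) ≠ 0 := by
  intro h
  have h2 : ((2 : ℕ) : ZMod v) = 0 := by exact_mod_cast h
  have := (ZMod.natCast_eq_zero_iff 2 v).1 h2
  have := Nat.le_of_dvd (by norm_num) this
  omega

lemma three_ne (hv : 4 < v) : (3 : ZMod v) ≠ 0 := by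
  intro h
  have h2 : ((3 : ℕ) : ZMod v) = 0 := by exact_mod_cast h
  have := (ZMod.natCast_eq_zero_iff 3 v).1 h2
  have := Nat.le_of_dvd (by norm_num) this
  omega

lemma l_ne_two (hv : 4 < v) {l : (ZMod v)ˣ} (hl2 : (l : ZMod v) * l = 1) :
    (l : ZMod v) ≠ 2 := by
  intro h
  exact three_ne hv (by linear_combination hl2 - ((l : ZMod v) + 2) * h)

lemma two_l_ne_one (hv : 4 < v) {l : (ZMod v)ˣ} (hl2 : (l : ZMod v) * l = 1) :
    2 * (l : ZMod v) ≠ 1 := by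
  intro h
  exact three_ne hv (by linear_combination (2 * (l : ZMod v) + 1) * h - 4 * hl2)

lemma two_l_ne_zero (hv : 4 < v) {l : (ZMod v)ˣ} (hl2 : (l : ZMod v) * l = 1) :
    2 * (l : ZMod v) ≠ 0 := by
  intro h
  exact two_ne hv (by linear_combination (l : ZMod v) * h - 2 * hl2)

lemma conds9_f (hv : 4 < v) {l : (ZMod v)ˣ} (hl2 : (l : ZMod v) * l = 1)
    (hl1 : (l : ZMod v) ≠ 1) (hm : (l : ZMod v) + 1 ≠ 0)
    (hq : 2 * (1 - (l : ZMod v)) ≠ 0) (u : (ZMod v)ˣ) :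
    Conds9 (u : ZMod v) ((l : ZMod v) * (u : ZMod v)) := by
  haveI : Fact (1 < v) := ⟨by omega⟩
  refine ⟨Units.ne_zero u, ?_, ?_, ?_, ?_, ?_, ?_, ?_, ?_⟩
  · intro h
    exact Units.ne_zero (l * u) (by rw [Units.val_mul]; exact h)
  · intro h
    exact hl1 (eq_of_mul_unit_eq u (by linear_combination h)).symm
  · intro h
    exact hm (by linear_combination unit_factor_zero u (show ((l:ZMod v) + 1) * u = 0 by linear_combination h))
  · intro h
    exact two_l_ne_one hv hl2 (eq_of_mul_unit_eq u (by linear_combination h)).symm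
  · intro h
    exact l_ne_two hv hl2 (eq_of_mul_unit_eq u (by linear_combination h))
  · intro h
    exact two_ne hv (unit_factor_zero u (by linear_combination h))
  · intro h
    exact two_l_ne_zero hv hl2 (unit_factor_zero u (by linear_combination h))
  · intro h
    exact hq (unit_factor_zero u (by linear_combination h))

lemma conds9_g (hv : 4 < v) {l : (ZMod v)ˣ} (hl2 : (l : ZMod v) * l = 1)
    (hl1 : (l : ZMod v) ≠ 1) (hm : (l : ZMod v) + 1 ≠ 0)
    (hq : 2 * (1 - (l : ZMod v)) ≠ 0) (u : (ZMod v)ˣ) :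
    Conds9 ((1 - (l : ZMod v)) * (u : ZMod v)) (u : ZMod v) := by
  haveI : Fact (1 < v) := ⟨by omega⟩
  refine ⟨?_, Units.ne_zero u, ?_, ?_, ?_, ?_, ?_, ?_, ?_⟩
  · intro h
    exact hl1 (by linear_combination -(unit_factor_zero u h))
  · intro h
    exact Units.ne_zero l (by linear_combination -(eq_of_mul_unit_eq u (show (1-(l:ZMod v)) * u = 1 * u by linear_combination h)))
  · intro h
    exact l_ne_two hv hl2 (by linear_combination -(unit_factor_zero u (show ((2:ZMod v)-l) * u = 0 by linear_combination h)))
  · intro h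
    exact hm (by linear_combination -(eq_of_mul_unit_eq u (show (1-(l:ZMod v)) * u = 2 * u by linear_combination h)))
  · intro h
    exact two_l_ne_one hv hl2 (by linear_combination -(eq_of_mul_unit_eq u (show (2*(1-(l:ZMod v))) * u = 1 * u by linear_combination -h)))
  · intro h
    exact hq (unit_factor_zero u (by linear_combination h))
  · intro h
    exact two_ne hv (unit_factor_zero u (by linear_combination h))
  · intro h
    exact two_l_ne_zero hv hl2 (by
      have := unit_factor_zero u (show (-(2*(l:ZMod v))) * u = 0 by linear_combination h)
      linear_combination -this)

lemma bcon_of_conds {a b : ZMod v} [NeZero v] (hc : Conds9 a b) (hu : IsUnit a ∨ IsUnit b) :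
    ({0,a,b} : Finset (ZMod v)) ∈ Bcon3 v := by
  refine ⟨card3_of a b hc.1 hc.2.1 hc.2.2.1, ?_, ?_⟩
  · rw [sub_lit]; exact (card7_iff a b).2 hc
  · have hmem : ∀ w : ZMod v, w ∈ ({0,a,b} : Finset (ZMod v)) →
        w ∈ ({0,a,b} : Finset (ZMod v)) - {0,a,b} := by
      intro w hw
      have := Finset.sub_mem_sub hw (show (0 : ZMod v) ∈ ({0,a,b} : Finset (ZMod v)) by simp)
      simpa using this
    rw [eq_top_iff]
    rcases hu with hu|hu
    · refine le_trans (le_of_eq (closure_eq_top_of_isUnit hu).symm)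
        (AddSubgroup.closure_mono ?_)
      exact Set.singleton_subset_iff.2 (Finset.mem_coe.2 (hmem a (by simp)))
    · refine le_trans (le_of_eq (closure_eq_top_of_isUnit hu).symm)
        (AddSubgroup.closure_mono ?_)
      exact Set.singleton_subset_iff.2 (Finset.mem_coe.2 (hmem b (by simp)))

lemma f_mem (hv : 4 < v) {l : (ZMod v)ˣ} (hl2 : (l : ZMod v) * l = 1)
    (hl1 : (l : ZMod v) ≠ 1) (hm : (l : ZMod v) + 1 ≠ 0)
    (hq : 2 * (1 - (l : ZMod v)) ≠ 0) (u : (ZMod v)ˣ) :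
    ({0, (u : ZMod v), (l : ZMod v) * (u : ZMod v)} : Finset (ZMod v)) ∈ Bcon3 v ∧
      (0 : ZMod v) ∈ ({0, (u : ZMod v), (l : ZMod v) * (u : ZMod v)} : Finset (ZMod v)) ∧
      ∃ x ∈ ({0, (u : ZMod v), (l : ZMod v) * (u : ZMod v)} : Finset (ZMod v)),
        ({0, (u : ZMod v), (l : ZMod v) * (u : ZMod v)} : Finset (ZMod v)).image
            (fun y => (l : ZMod v) * y) =
          ({0, (u : ZMod v), (l : ZMod v) * (u : ZMod v)} : Finset (ZMod v)).image
            (fun y => y - x) := by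
  haveI : NeZero v := ⟨by omega⟩
  refine ⟨bcon_of_conds (conds9_f hv hl2 hl1 hm hq u) (Or.inl u.isUnit), by simp, 0, by simp, ?_⟩
  have key : (l : ZMod v) * ((l : ZMod v) * u) = u := by linear_combination (u : ZMod v) * hl2
  simp only [Finset.image_insert, Finset.image_singleton, mul_zero, sub_zero, key]
  rw [Finset.pair_comm ((l : ZMod v) * u) (u : ZMod v)]

lemma g_mem (hv : 4 < v) {l : (ZMod v)ˣ} (hl2 : (l : ZMod v) * l = 1)
    (hl1 : (l : ZMod v) ≠ 1) (hm : (l : ZMod v) + 1 ≠ 0)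
    (hq : 2 * (1 - (l : ZMod v)) ≠ 0) (u : (ZMod v)ˣ) :
    ({0, (1 - (l : ZMod v)) * (u : ZMod v), (u : ZMod v)} : Finset (ZMod v)) ∈ Bcon3 v ∧
      (0 : ZMod v) ∈ ({0, (1 - (l : ZMod v)) * (u : ZMod v), (u : ZMod v)} : Finset (ZMod v)) ∧
      ∃ x ∈ ({0, (1 - (l : ZMod v)) * (u : ZMod v), (u : ZMod v)} : Finset (ZMod v)),
        ({0, (1 - (l : ZMod v)) * (u : ZMod v), (u : ZMod v)} : Finset (ZMod v)).image
            (fun y => (l : ZMod v) * y) =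
          ({0, (1 - (l : ZMod v)) * (u : ZMod v), (u : ZMod v)} : Finset (ZMod v)).image
            (fun y => y - x) := by
  haveI : NeZero v := ⟨by omega⟩
  refine ⟨bcon_of_conds (conds9_g hv hl2 hl1 hm hq u) (Or.inr u.isUnit), by simp,
    (1 - (l : ZMod v)) * (u : ZMod v), by simp, ?_⟩
  have k1 : (l : ZMod v) * ((1 - (l : ZMod v)) * u) = ((l : ZMod v) - 1) * u := by
    linear_combination -(u : ZMod v) * hl2
  have k2 : (0 : ZMod v) - (1 - (l : ZMod v)) * u = ((l : ZMod v) - 1) * u := by ring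
  have k3 : (1 - (l : ZMod v)) * (u : ZMod v) - (1 - (l : ZMod v)) * u = 0 := by ring
  have k4 : (u : ZMod v) - (1 - (l : ZMod v)) * u = (l : ZMod v) * u := by
    linear_combination 0 * hl2
  simp only [Finset.image_insert, Finset.image_singleton, mul_zero, k1, k2, k3, k4]
  rw [Finset.insert_comm]

end Backward

section Conv
variable {v : ℕ}

lemma val_ne_zero (hv : 4 < v) (l : (ZMod v)ˣ) : (l : ZMod v).val ≠ 0 := by
  haveI : NeZero v := ⟨by omega⟩
  haveI : Fact (1 < v) := ⟨by omega⟩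
  intro h
  apply Units.ne_zero l
  have := ZMod.natCast_rightInverse (n := v) (l : ZMod v)
  rw [h] at this
  simpa using this.symm

lemma val_ne_one (hv : 4 < v) (l : (ZMod v)ˣ) (hl1 : (l : ZMod v) ≠ 1) :
    (l : ZMod v).val ≠ 1 := by
  haveI : NeZero v := ⟨by omega⟩
  intro h
  apply hl1
  have := ZMod.natCast_rightInverse (n := v) (l : ZMod v)
  rw [h] at this
  simpa using this.symm

/-- From the congruence conditions, conclude `2(1-l) = 0`. -/
lemma cond_to_eq (hv : 4 < v) (l : (ZMod v)ˣ) (hl1 : (l : ZMod v) ≠ 1)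
    (hB : v % 4 = 0 ∧ (l : ZMod v).val ≡ 1 [MOD v / 2]) :
    2 * (1 - (l : ZMod v)) = 0 := by
  haveI : NeZero v := ⟨by omega⟩
  obtain ⟨h4, hmod⟩ := hB
  set w := (l : ZMod v).val with hw
  have hw1 : 1 ≤ w := by
    have := val_ne_zero hv l
    omega
  have hdvd : v / 2 ∣ w - 1 := (Nat.modEq_iff_dvd' hw1).1 hmod.symm
  have h2v : 2 * (v / 2) = v := by omega
  have hdvd2 : v ∣ 2 * (w - 1) := by
    rw [← h2v]
    exact mul_dvd_mul_left 2 hdvd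
  have hc : ((2 * (w - 1) : ℕ) : ZMod v) = 0 := (ZMod.natCast_eq_zero_iff _ v).2 hdvd2
  have hcast : ((w : ℕ) : ZMod v) = (l : ZMod v) := ZMod.natCast_rightInverse _
  push_cast [Nat.cast_sub hw1] at hc
  rw [hcast] at hc
  linear_combination -hc

/-- Conversely, `2(1-l)=0` (with `l` of order two) gives the congruence conditions. -/
lemma eq_to_cond (hv : 4 < v) (l : (ZMod v)ˣ) (hl2 : (l : ZMod v) * l = 1)
    (hl1 : (l : ZMod v) ≠ 1) (hq0 : 2 * (1 - (l : ZMod v)) = 0) :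
    v % 4 = 0 ∧ (l : ZMod v).val ≡ 1 [MOD v / 2] := by
  haveI : NeZero v := ⟨by omega⟩
  set w := (l : ZMod v).val with hwdef
  have hcast : ((w : ℕ) : ZMod v) = (l : ZMod v) := ZMod.natCast_rightInverse _
  have hwlt : w < v := ZMod.val_lt _
  have hw1 : 1 ≤ w := by have := val_ne_zero hv l; omega
  have hwne1 : w ≠ 1 := val_ne_one hv l hl1
  -- 2w ≡ 2 mod v
  have h1 : ((2 * w : ℕ) : ZMod v) = ((2 : ℕ) : ZMod v) := by
    push_cast [hcast]
    linear_combination -hq0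
  have hmod : (2 * w) % v = 2 % v := (ZMod.natCast_eq_natCast_iff _ _ _).1 h1
  have hdvd : v ∣ 2 * w - 2 := (Nat.modEq_iff_dvd' (by omega)).1 (Nat.ModEq.symm hmod)
  obtain ⟨k, hk⟩ := hdvd
  have hveq : v = 2 * w - 2 := by
    rcases Nat.lt_or_ge k 1 with h | h
    · interval_cases k <;> omega
    · rcases Nat.lt_or_ge k 2 with h' | h'
      · interval_cases k <;> omega
      · have h2k : v * 2 ≤ v * k := Nat.mul_le_mul_left v h'
        omega
  -- l^2 = 1 on values
  have h2 : ((w * w : ℕ) : ZMod v) = ((1 : ℕ) : ZMod v) := by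
    push_cast [hcast]
    linear_combination hl2
  have hmod2 : (w * w) % v = 1 % v := (ZMod.natCast_eq_natCast_iff _ _ _).1 h2
  have hdvd2 : v ∣ w * w - 1 := (Nat.modEq_iff_dvd' (by nlinarith)).1 (Nat.ModEq.symm hmod2)
  obtain ⟨k2, hk2⟩ := hdvd2
  -- parity of w
  have h2dvdv : 2 ∣ v := ⟨w - 1, by omega⟩
  have h2dvd : 2 ∣ w * w - 1 := hk2 ▸ h2dvdv.mul_right k2
  have hwpar : w % 2 = 1 := by
    rcases Nat.mod_two_eq_zero_or_one w with h | h
    · exfalso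
      have hmm : (w * w) % 2 = 0 := by rw [Nat.mul_mod, h]
      have hm1 : 1 * 1 ≤ w * w := Nat.mul_le_mul hw1 hw1
      generalize hg : w * w = m at hmm hm1 hk2
      omega
    · exact h
  constructor
  · omega
  · have hv2 : v / 2 = w - 1 := by omega
    rw [Nat.ModEq, hv2]
    set t := w - 1 with ht
    have hwt : w = t + 1 := by omega
    rw [hwt]
    exact Nat.add_mod_left t 1

end Conv

/-- if `l ∈ Z_v*` has multiplicative order 2, then `N(v,3,l) = 0`
when `l + 1 ≡ 0 (mod v)`, or when `v ≡ 0 (mod 4)` and `l ≡ 1 (mod v/2)`;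
otherwise `N(v,3,l) = 3φ(v)/2`. -/
theorem Nparam3_of_order_two
    (v : ℕ) (hv : 4 < v) (l : (ZMod v)ˣ) (hord : orderOf l = 2) :
    (((l : ZMod v) + 1 = 0 ∨ (v % 4 = 0 ∧ (l : ZMod v).val ≡ 1 [MOD v / 2])) →
        Nparam3 v l = 0) ∧
    (¬ ((l : ZMod v) + 1 = 0 ∨ (v % 4 = 0 ∧ (l : ZMod v).val ≡ 1 [MOD v / 2])) →
        2 * Nparam3 v l = 3 * Nat.totient v) := by
  haveI : NeZero v := ⟨by omega⟩
  haveI : Fact (1 < v) := ⟨by omega⟩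
  have hl2 : (l : ZMod v) * l = 1 := by
    have h := pow_orderOf_eq_one l
    rw [hord] at h
    have h2 : ((l ^ 2 : (ZMod v)ˣ) : ZMod v) = 1 := by rw [h]; rfl
    rw [Units.val_pow_eq_pow_val, pow_two] at h2
    exact h2
  have hl1 : (l : ZMod v) ≠ 1 := by
    intro h
    have h1 : l = 1 := Units.ext h
    rw [h1, orderOf_one] at hord
    omega
  constructor
  · -- degenerate case
    intro hdeg
    have hbad : ((l : ZMod v) + 1 = 0) ∨ (2 * (1 - (l : ZMod v)) = 0) := by
      rcases hdeg with h | h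
      · exact Or.inl h
      · exact Or.inr (cond_to_eq hv l hl1 h)
    have hempty : ∀ X : Finset (ZMod v), ¬(X ∈ Bcon3 v ∧ (0 : ZMod v) ∈ X ∧
        ∃ x ∈ X, X.image (fun y => (l : ZMod v) * y) = X.image (fun y => y - x)) := by
      intro X hX
      rcases forward hv l hl2 hl1 hX with ⟨u, _, hc⟩ | ⟨u, _, hc⟩ <;> rcases hbad with hA | hB
      · exact hc.2.2.2.1 (by linear_combination (u : ZMod v) * hA)
      · exact hc.2.2.2.2.2.2.2.2 (by linear_combination (u : ZMod v) * hB)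
      · exact hc.2.2.2.2.1 (by linear_combination -(u : ZMod v) * hA)
      · exact hc.2.2.2.2.2.2.1 (by linear_combination (u : ZMod v) * hB)
    haveI : IsEmpty {X : Finset (ZMod v) // X ∈ Bcon3 v ∧ (0 : ZMod v) ∈ X ∧
        ∃ x ∈ X, X.image (fun y => (l : ZMod v) * y) = X.image (fun y => y - x)} :=
      ⟨fun y => hempty y.1 y.2⟩
    simp only [Nparam3]
    exact Nat.card_of_isEmpty
  · -- main case
    intro hmain
    push_neg at hmain
    obtain ⟨hm, hB⟩ := hmain
    have hq : 2 * (1 - (l : ZMod v)) ≠ 0 := by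
      intro hq0
      obtain ⟨c1, c2⟩ := eq_to_cond hv l hl2 hl1 hq0
      exact hB c1 c2
    classical
    set f : (ZMod v)ˣ → Finset (ZMod v) :=
      fun u => {0, (u : ZMod v), (l : ZMod v) * (u : ZMod v)} with hf
    set g : (ZMod v)ˣ → Finset (ZMod v) :=
      fun u => {0, (1 - (l : ZMod v)) * (u : ZMod v), (u : ZMod v)} with hg
    set T0 := Finset.image f Finset.univ with hT0def
    set T1 := Finset.image g Finset.univ with hT1def
    -- the predicate is equivalent to membership in T0 ∪ T1
    have hiff : ∀ X : Finset (ZMod v), (X ∈ Bcon3 v ∧ (0 : ZMod v) ∈ X ∧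
        ∃ x ∈ X, X.image (fun y => (l : ZMod v) * y) = X.image (fun y => y - x)) ↔
        X ∈ T0 ∪ T1 := by
      intro X
      constructor
      · intro hX
        rcases forward hv l hl2 hl1 hX with ⟨u, hXeq, _⟩ | ⟨u, hXeq, _⟩
        · exact Finset.mem_union.2 (Or.inl (Finset.mem_image.2 ⟨u, Finset.mem_univ u, hXeq.symm⟩))
        · exact Finset.mem_union.2 (Or.inr (Finset.mem_image.2 ⟨u, Finset.mem_univ u, hXeq.symm⟩))
      · intro hX
        rcases Finset.mem_union.1 hX with h | h <;> obtain ⟨u, _, rfl⟩ := Finset.mem_image.1 h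
        · exact f_mem hv hl2 hl1 hm hq u
        · exact g_mem hv hl2 hl1 hm hq u
    have hcard : Nparam3 v l = (T0 ∪ T1).card := by
      simp only [Nparam3]
      rw [Nat.card_congr (Equiv.subtypeEquivRight hiff), Nat.card_eq_fintype_card,
        Fintype.card_coe]
    -- 1 - l is not a unit
    have not_unit : ∀ (u' w : (ZMod v)ˣ), (1 - (l : ZMod v)) * (u' : ZMod v) = (w : ZMod v) →
        False := by
      intro u' w h
      have hu : (1 - (l : ZMod v)) * ((u' : ZMod v) * ((w⁻¹ : (ZMod v)ˣ) : ZMod v)) = 1 := by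
        rw [← mul_assoc, h, Units.mul_inv]
      have hz : ((l : ZMod v) + 1) * ((1 - (l : ZMod v)) *
          ((u' : ZMod v) * ((w⁻¹ : (ZMod v)ˣ) : ZMod v))) = (l : ZMod v) + 1 := by
        rw [hu, mul_one]
      apply hm
      calc (l : ZMod v) + 1 = ((l : ZMod v) + 1) * ((1 - (l : ZMod v)) *
          ((u' : ZMod v) * ((w⁻¹ : (ZMod v)ˣ) : ZMod v))) := hz.symm
        _ = ((1 - (l : ZMod v) * (l : ZMod v)) *
            ((u' : ZMod v) * ((w⁻¹ : (ZMod v)ˣ) : ZMod v))) := by ring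
        _ = 0 := by rw [hl2]; ring
    -- disjointness
    have hdisj : Disjoint T0 T1 := by
      rw [Finset.disjoint_left]
      intro X hX0 hX1
      obtain ⟨u, _, rfl⟩ := Finset.mem_image.1 hX0
      obtain ⟨u', _, hgu⟩ := Finset.mem_image.1 hX1
      have hmem : (1 - (l : ZMod v)) * (u' : ZMod v) ∈ f u := by
        rw [← hgu]
        simp [hg]
      simp only [hf, Finset.mem_insert, Finset.mem_singleton] at hmem
      rcases hmem with h | h | h
      · exact hl1 (by linear_combination -(unit_factor_zero u' h))
      · exact not_unit u' u h
      · exact not_unit u' (l * u) (by rw [h, Units.val_mul])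
    -- cardinality of T1
    have hT1 : T1.card = Fintype.card (ZMod v)ˣ := by
      rw [hT1def, Finset.card_image_of_injective _ ?_, Finset.card_univ]
      intro u1 u2 h
      have hmem : (u1 : ZMod v) ∈ g u2 := by
        rw [← h]; simp [hg]
      simp only [hg, Finset.mem_insert, Finset.mem_singleton] at hmem
      rcases hmem with h' | h' | h'
      · exact absurd h' (Units.ne_zero u1)
      · exact absurd (not_unit u2 u1 h'.symm) not_false
      · exact Units.ext h'
    -- cardinality of T0 : fibers of f have exactly two elements
    have hfib : ∀ u0 : (ZMod v)ˣ,
        Finset.univ.filter (fun u => f u = f u0) = {u0, l * u0} := by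
      intro u0
      ext u
      simp only [Finset.mem_filter, Finset.mem_univ, true_and, Finset.mem_insert,
        Finset.mem_singleton]
      constructor
      · intro h
        have hmem : (u : ZMod v) ∈ f u0 := by
          rw [← h]; simp [hf]
        simp only [hf, Finset.mem_insert, Finset.mem_singleton] at hmem
        rcases hmem with h' | h' | h'
        · exact absurd h' (Units.ne_zero u)
        · exact Or.inl (Units.ext h')
        · exact Or.inr (Units.ext (by rw [h', Units.val_mul]))
      · rintro (rfl | rfl)
        · rfl
        · have k2 : (l : ZMod v) * ((l : ZMod v) * (u0 : ZMod v)) = (u0 : ZMod v) := by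
            linear_combination (u0 : ZMod v) * hl2
          show f (l * u0) = f u0
          simp only [hf, Units.val_mul, k2]
          rw [Finset.pair_comm]
    have hT0 : Fintype.card (ZMod v)ˣ = T0.card * 2 := by
      have h1 : (Finset.univ : Finset (ZMod v)ˣ).card = ∑ b ∈ T0,
          (Finset.univ.filter (fun u => f u = b)).card :=
        Finset.card_eq_sum_card_image f Finset.univ
      have h2 : ∀ b ∈ T0, (Finset.univ.filter (fun u => f u = b)).card = 2 := by
        intro b hb
        obtain ⟨u0, _, rfl⟩ := Finset.mem_image.1 hb
        rw [hfib u0]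
        rw [Finset.card_insert_of_notMem, Finset.card_singleton]
        simp only [Finset.mem_singleton]
        intro hc
        apply hl1
        have : l = 1 := by
          have := mul_right_cancel (a := l) (b := u0) (c := 1) (by rw [one_mul]; exact hc.symm)
          exact this
        rw [this]; rfl
      rw [← Finset.card_univ, h1, Finset.sum_congr rfl h2, Finset.sum_const, smul_eq_mul]
    have htot := ZMod.card_units_eq_totient v
    rw [hcard, Finset.card_union_of_disjoint hdisj]
    omega
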